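/- arXiv:1204.6052 — 3 statements merged into one kernel-verified Lean document; each statement's English description precedes it below -/
import Mathlib

section
/- Let p = ⊗ᵢ₌₁ᵏ |e₁^(i)⟩⟨e₁^(i)| be a pure product state on H^(1)⊗…⊗H^(k), with each H^(i) of dimension n, and extend each |e₁^(i)⟩ to an orthonormal basis {|e_j^(i)⟩}_{j=1,…,n} of H^(i). Then the operators ⊗_{i<j}|e₁^(i)⟩⟨e₁^(i)| ⊗ σ_a(1m) ⊗ ⊗_{i>j}|e₁^(i)⟩⟨e₁^(i)| for a ∈ {1,2}, m = 2,…,n, j = 1,…,k (where σ₁(1m), σ₂(1m) are the generalized Pauli matrices acting on H^(j) in the chosen basis) all belong to the separable tangent space C(p), and they form a spanning set of C(p). -/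
open Matrix
open scoped ComplexOrder

namespace EWitness

/-- Operators on the tensor product `H⁽¹⁾ ⊗ ⋯ ⊗ H⁽ᵏ⁾` of finite-dimensional complex
Hilbert spaces (with `dim H⁽ⁱ⁾ = n i`), modeled as matrices indexed by tuples. -/
abbrev Op {k : ℕ} (n : Fin k → ℕ) := Matrix (∀ i, Fin (n i)) (∀ i, Fin (n i)) ℂ

/-- Tensor (Kronecker) product of one operator per tensor factor. -/
def tensorOp {k : ℕ} (n : Fin k → ℕ) (A : ∀ i, Matrix (Fin (n i)) (Fin (n i)) ℂ) : Op n :=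
  Matrix.of fun x y => ∏ i, A i (x i) (y i)

/-- Tensor product of one vector per tensor factor. -/
def tensorVec {k : ℕ} (n : Fin k → ℕ) (v : ∀ i, Fin (n i) → ℂ) : (∀ i, Fin (n i)) → ℂ :=
  fun x => ∏ i, v i (x i)

/-- The rank one projector `|v⟩⟨v|`. -/
def proj {m : Type*} (v : m → ℂ) : Matrix m m ℂ := Matrix.vecMulVec v (star v)

/-- The trace inner product `(a,b) = Tr(a† b)` (its real part; on the real vector space of
Hermitian operators this is exactly the trace inner product, which is real-valued there). -/
noncomputable def tinner {m : Type*} [Fintype m] (a b : Matrix m m ℂ) : ℝ :=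
  ((aᴴ * b).trace).re

/-- A state: a positive semidefinite trace-one operator. -/
noncomputable def IsState {m : Type*} [Fintype m] (ρ : Matrix m m ℂ) : Prop :=
  ρ.PosSemidef ∧ ρ.trace = 1

/-- A pure product state `⊗ᵢ |e⁽ⁱ⁾⟩⟨e⁽ⁱ⁾|` with the `e⁽ⁱ⁾` unit vectors. -/
def IsPureProduct {k : ℕ} (n : Fin k → ℕ) (p : Op n) : Prop :=
  ∃ e : ∀ i, Fin (n i) → ℂ,
    (∀ i, star (e i) ⬝ᵥ e i = 1) ∧ p = tensorOp n fun i => proj (e i)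

/-- A separable state: a finite convex combination of tensor products of states. -/
noncomputable def IsSeparable {k : ℕ} (n : Fin k → ℕ) (ϱ : Op n) : Prop :=
  ∃ (N : ℕ) (w : Fin N → ℝ) (ρ : Fin N → ∀ i, Matrix (Fin (n i)) (Fin (n i)) ℂ),
    (∀ j, 0 ≤ w j) ∧ ((∑ j, w j) = 1) ∧ (∀ j i, IsState (ρ j i)) ∧
    ϱ = ∑ j, (w j : ℂ) • tensorOp n (ρ j)

/-- The generating set of `τ⁽ⁱ⁾`: operators `I ⊗ ⋯ ⊗ h⁽ⁱ⁾ ⊗ ⋯ ⊗ I`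
with `h⁽ⁱ⁾` Hermitian and traceless. -/
def tauGen {k : ℕ} (n : Fin k → ℕ) (i : Fin k) : Set (Op n) :=
  {T | ∃ h : Matrix (Fin (n i)) (Fin (n i)) ℂ, h.IsHermitian ∧ h.trace = 0 ∧
      T = tensorOp n (Function.update (fun j => (1 : Matrix (Fin (n j)) (Fin (n j)) ℂ)) i h)}

/-- `τ⁽ⁱ⁾`: the real span of operators `I ⊗ ⋯ ⊗ h⁽ⁱ⁾ ⊗ ⋯ ⊗ I`. -/
noncomputable def tauComp {k : ℕ} (n : Fin k → ℕ) (i : Fin k) : Submodule ℝ (Op n) :=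
  Submodule.span ℝ (tauGen n i)

/-- `τ = span(⋃ᵢ τ⁽ⁱ⁾)`. -/
noncomputable def tau {k : ℕ} (n : Fin k → ℕ) : Submodule ℝ (Op n) :=
  Submodule.span ℝ (⋃ i, tauGen n i)

/-- The separable tangent space `C(p) = {i[p,t] : t ∈ τ}`. -/
def sepTangent {k : ℕ} (n : Fin k → ℕ) (p : Op n) : Set (Op n) :=
  {x | ∃ t ∈ tau n, x = Complex.I • (p * t - t * p)}

/-- Condition (★): for every pure product state `p` orthogonal to `a`, the separable tangent
space `C(p)` is contained in the hyperplane `I_a = {x : (x,a) = 0}`. -/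
def StarCond {k : ℕ} (n : Fin k → ℕ) (a : Op n) : Prop :=
  ∀ p : Op n, IsPureProduct n p → tinner a p = 0 →
    sepTangent n p ⊆ {x : Op n | tinner x a = 0}

/-- An operator is supported on a subspace `W` if it vanishes on the orthogonal
complement of `W` and its range is contained in `W`. -/
def SupportedOn {m : Type*} [Fintype m] (W : Submodule ℂ (m → ℂ)) (M : Matrix m m ℂ) : Prop :=
  (∀ v, M.mulVec v ∈ W) ∧ (∀ v, (∀ w ∈ W, star w ⬝ᵥ v = 0) → M.mulVec v = 0)


section Helpers

set_option linter.unusedSectionVars false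

variable {N : ℕ}

lemma vmv_mul_vmv (u v w z : Fin N → ℂ) :
    vecMulVec u v * vecMulVec w z = (v ⬝ᵥ w) • vecMulVec u z := by
  ext i j
  simp only [Matrix.mul_apply, vecMulVec_apply, Matrix.smul_apply, dotProduct, smul_eq_mul,
    Finset.sum_mul]
  exact Finset.sum_congr rfl fun x _ => by ring

lemma mul_vmv (A : Matrix (Fin N) (Fin N) ℂ) (u v : Fin N → ℂ) :
    A * vecMulVec u v = vecMulVec (A.mulVec u) v := by
  ext i j
  simp only [Matrix.mul_apply, vecMulVec_apply, mulVec, dotProduct, Finset.sum_mul]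
  exact Finset.sum_congr rfl fun x _ => by ring

lemma vmv_mul (A : Matrix (Fin N) (Fin N) ℂ) (u v : Fin N → ℂ) :
    vecMulVec u v * A = vecMulVec u (A.vecMul v) := by
  ext i j
  simp only [Matrix.mul_apply, vecMulVec_apply, vecMul, dotProduct, Finset.mul_sum]
  exact Finset.sum_congr rfl fun x _ => by ring

lemma vmv_mulVec (u v w : Fin N → ℂ) :
    (vecMulVec u v).mulVec w = (v ⬝ᵥ w) • u := by
  funext i
  simp only [mulVec, dotProduct, vecMulVec_apply, Pi.smul_apply, smul_eq_mul, Finset.sum_mul]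
  exact Finset.sum_congr rfl fun x _ => by ring

lemma vmv_conjT (u v : Fin N → ℂ) : (vecMulVec u (star v))ᴴ = vecMulVec v (star u) := by
  ext i j
  simp [vecMulVec_apply, conjTranspose_apply, mul_comm]

lemma trace_vmv (u v : Fin N → ℂ) : (vecMulVec u (star v)).trace = star v ⬝ᵥ u := by
  simp [Matrix.trace, vecMulVec_apply, dotProduct, Matrix.diag, mul_comm]

lemma completeness (c : Fin N → Fin N → ℂ)
    (hc : ∀ j j', star (c j) ⬝ᵥ c j' = if j = j' then (1:ℂ) else 0) :
    ∑ j, vecMulVec (c j) (star (c j)) = (1 : Matrix (Fin N) (Fin N) ℂ) := by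
  set M : Matrix (Fin N) (Fin N) ℂ := Matrix.of fun x j => c j x with hM
  have h1 : Mᴴ * M = 1 := by
    ext j j'
    simpa [Matrix.mul_apply, conjTranspose_apply, Matrix.one_apply, dotProduct, hM] using hc j j'
  have h2 : M * Mᴴ = 1 := mul_eq_one_comm.mp h1
  ext x y
  have := congrFun (congrFun h2 x) y
  simpa [Matrix.sum_apply, vecMulVec_apply, Matrix.mul_apply, conjTranspose_apply, hM] using this

lemma herm_dot (h : Matrix (Fin N) (Fin N) ℂ) (hh : h.IsHermitian) (u v : Fin N → ℂ) :
    star u ⬝ᵥ h.mulVec v = starRingEnd ℂ (star v ⬝ᵥ h.mulVec u) := by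
  simp only [dotProduct, mulVec, map_sum, _root_.map_mul, Finset.mul_sum, Pi.star_apply]
  rw [Finset.sum_comm]
  refine Finset.sum_congr rfl fun i _ => Finset.sum_congr rfl fun j _ => ?_
  have hij := hh.apply i j
  simp only [Complex.star_def] at *
  rw [← hij]
  ring_nf
  simp [mul_comm, mul_left_comm]

lemma sum_mulVec' {ι : Type*} (s : Finset ι) (f : ι → Matrix (Fin N) (Fin N) ℂ)
    (v : Fin N → ℂ) : (∑ i ∈ s, f i).mulVec v = ∑ i ∈ s, (f i).mulVec v := by
  funext x
  simp only [mulVec, dotProduct, Matrix.sum_apply, Finset.sum_apply, Finset.sum_mul]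
  rw [Finset.sum_comm]

lemma tensorOp_mul {k : ℕ} (n : Fin k → ℕ) (A B : ∀ i, Matrix (Fin (n i)) (Fin (n i)) ℂ) :
    tensorOp n A * tensorOp n B = tensorOp n fun i => A i * B i := by
  ext x y
  simp only [tensorOp, Matrix.of_apply, Matrix.mul_apply]
  calc ∑ z : ∀ i, Fin (n i), (∏ i, A i (x i) (z i)) * ∏ i, B i (z i) (y i)
      = ∑ z : ∀ i, Fin (n i), ∏ i, A i (x i) (z i) * B i (z i) (y i) := by
        simp [Finset.prod_mul_distrib]
    _ = ∏ i, ∑ j, A i (x i) j * B i j (y i) := by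
        rw [Finset.prod_univ_sum, Fintype.piFinset_univ]

lemma tensorOp_update_apply {k : ℕ} (A : Fin k → Matrix (Fin N) (Fin N) ℂ) (jj : Fin k)
    (h : Matrix (Fin N) (Fin N) ℂ) (x y : ∀ _ : Fin k, Fin N) :
    tensorOp (fun _ => N) (Function.update A jj h) x y
      = h (x jj) (y jj) * ∏ i ∈ Finset.univ \ {jj}, A i (x i) (y i) := by
  simp only [tensorOp, Matrix.of_apply]
  rw [← Finset.prod_update_of_mem (Finset.mem_univ jj) (fun i => A i (x i) (y i))
    (h (x jj) (y jj))]
  refine Finset.prod_congr rfl fun i _ => ?_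
  rcases eq_or_ne i jj with rfl | hi
  · simp
  · simp [Function.update_of_ne hi]

/-- The `ℂ`-linear "slot" map `h ↦ A₁ ⊗ ⋯ ⊗ h ⊗ ⋯ ⊗ Aₖ`. -/
noncomputable def slotL {k : ℕ} (A : Fin k → Matrix (Fin N) (Fin N) ℂ) (jj : Fin k) :
    Matrix (Fin N) (Fin N) ℂ →ₗ[ℂ] Op (fun _ : Fin k => N) where
  toFun h := tensorOp (fun _ => N) (Function.update A jj h)
  map_add' h h' := by
    ext x y
    simp [tensorOp_update_apply, add_mul]
  map_smul' c h := by
    ext x y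
    simp [tensorOp_update_apply, Matrix.smul_apply, smul_eq_mul, mul_assoc]

lemma slotL_apply {k : ℕ} (A : Fin k → Matrix (Fin N) (Fin N) ℂ) (jj : Fin k)
    (h : Matrix (Fin N) (Fin N) ℂ) :
    slotL A jj h = tensorOp (fun _ => N) (Function.update A jj h) := rfl

lemma mul_update_one {k : ℕ} (A : Fin k → Matrix (Fin N) (Fin N) ℂ) (jj : Fin k)
    (h : Matrix (Fin N) (Fin N) ℂ) :
    (fun i => A i * Function.update (fun _ => (1 : Matrix (Fin N) (Fin N) ℂ)) jj h i)
      = Function.update A jj (A jj * h) := by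
  funext i
  rcases eq_or_ne i jj with rfl | hi
  · simp
  · simp [Function.update_of_ne hi]

lemma update_one_mul {k : ℕ} (A : Fin k → Matrix (Fin N) (Fin N) ℂ) (jj : Fin k)
    (h : Matrix (Fin N) (Fin N) ℂ) :
    (fun i => Function.update (fun _ => (1 : Matrix (Fin N) (Fin N) ℂ)) jj h i * A i)
      = Function.update A jj (h * A jj) := by
  funext i
  rcases eq_or_ne i jj with rfl | hi
  · simp
  · simp [Function.update_of_ne hi]

lemma comm_slot {k : ℕ} (A : Fin k → Matrix (Fin N) (Fin N) ℂ) (jj : Fin k)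
    (h : Matrix (Fin N) (Fin N) ℂ) :
    Complex.I • (tensorOp (fun _ => N) A *
        tensorOp (fun _ => N) (Function.update (fun _ => (1 : Matrix (Fin N) (Fin N) ℂ)) jj h)
      - tensorOp (fun _ => N) (Function.update (fun _ => (1 : Matrix (Fin N) (Fin N) ℂ)) jj h)
        * tensorOp (fun _ => N) A)
    = slotL A jj (Complex.I • (A jj * h - h * A jj)) := by
  rw [tensorOp_mul, tensorOp_mul, mul_update_one, update_one_mul,
    ← slotL_apply, ← slotL_apply, ← map_sub, ← _root_.map_smul]

end Helpers

/-- Let `p = ⊗ᵢ |e₀⁽ⁱ⁾⟩⟨e₀⁽ⁱ⁾|` be a pure product state on the tensor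
product of `k` Hilbert spaces of dimension `n`, where each `|e₀⁽ⁱ⁾⟩ = b i 0` is extended
to an orthonormal basis `{b i j}ⱼ`.  The operators obtained by replacing the `jj`-th
factor by a generalized Pauli matrix `σ₁(1m)` or `σ₂(1m)` (in the chosen basis, here
`σ₁(1m) = |e₀⟩⟨eₘ| + |eₘ⟩⟨e₀|` and `σ₂(1m) = i|e₀⟩⟨eₘ| − i|eₘ⟩⟨e₀|`, `m ≠ 0`) all belong
to the separable tangent space `C(p)`, and they form a spanning set of `C(p)`. -/
theorem sepTangent_spanned_by_generalized_pauli {k n : ℕ} [NeZero n]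
    (b : Fin k → Fin n → Fin n → ℂ)
    (hb : ∀ i j j', star (b i j) ⬝ᵥ b i j' = if j = j' then (1 : ℂ) else 0) :
    (∀ (jj : Fin k) (m : Fin n), m ≠ 0 →
      tensorOp (fun _ => n) (Function.update (fun i => proj (b i 0)) jj
          (vecMulVec (b jj 0) (star (b jj m)) + vecMulVec (b jj m) (star (b jj 0))))
        ∈ sepTangent (fun _ => n) (tensorOp (fun _ => n) fun i => proj (b i 0)) ∧
      tensorOp (fun _ => n) (Function.update (fun i => proj (b i 0)) jj
          (Complex.I • vecMulVec (b jj 0) (star (b jj m))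
            - Complex.I • vecMulVec (b jj m) (star (b jj 0))))
        ∈ sepTangent (fun _ => n) (tensorOp (fun _ => n) fun i => proj (b i 0))) ∧
    sepTangent (fun _ => n) (tensorOp (fun _ => n) fun i => proj (b i 0)) ⊆
      ↑(Submodule.span ℝ
        {T : Op (fun _ : Fin k => n) | ∃ (jj : Fin k) (m : Fin n), m ≠ 0 ∧
          (T = tensorOp (fun _ => n) (Function.update (fun i => proj (b i 0)) jj
              (vecMulVec (b jj 0) (star (b jj m)) + vecMulVec (b jj m) (star (b jj 0)))) ∨
           T = tensorOp (fun _ => n) (Function.update (fun i => proj (b i 0)) jj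
              (Complex.I • vecMulVec (b jj 0) (star (b jj m))
                - Complex.I • vecMulVec (b jj m) (star (b jj 0)))))}) := by
  classical
  set A : Fin k → Matrix (Fin n) (Fin n) ℂ := fun i => proj (b i 0) with hA
  constructor
  · -- membership of the Pauli operators
    intro jj m hm
    have h0m' : (0 : Fin n) ≠ m := fun e => hm e.symm
    have h00 : star (b jj 0) ⬝ᵥ b jj 0 = 1 := by simpa using hb jj 0 0
    have h0m : star (b jj 0) ⬝ᵥ b jj m = 0 := by simpa [h0m'] using hb jj 0 m
    have hm0 : star (b jj m) ⬝ᵥ b jj 0 = 0 := by simpa [hm] using hb jj m 0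
    constructor
    · -- σ₁ case
      refine ⟨tensorOp (fun _ => n) (Function.update (fun _ => (1 : Matrix (Fin n) (Fin n) ℂ)) jj
        (Complex.I • vecMulVec (b jj m) (star (b jj 0))
          - Complex.I • vecMulVec (b jj 0) (star (b jj m)))), ?_, ?_⟩
      · refine Submodule.subset_span (Set.mem_iUnion.2 ⟨jj, ?_⟩)
        refine ⟨_, ?_, ?_, rfl⟩
        · show _ᴴ = _
          simp only [conjTranspose_sub, conjTranspose_smul, vmv_conjT, Complex.star_def,
            Complex.conj_I, neg_smul]
          abel
        · simp [Matrix.trace_sub, Matrix.trace_smul, trace_vmv, h0m, hm0]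
          rw [dotProduct_comm (b jj m), dotProduct_comm (b jj 0), h0m, hm0]
          simp
      · rw [comm_slot]
        have c1 : A jj * (Complex.I • vecMulVec (b jj m) (star (b jj 0))
            - Complex.I • vecMulVec (b jj 0) (star (b jj m)))
            = -(Complex.I • vecMulVec (b jj 0) (star (b jj m))) := by
          simp [hA, proj, mul_sub, Matrix.mul_smul, vmv_mul_vmv, h00, h0m]
        have c2 : (Complex.I • vecMulVec (b jj m) (star (b jj 0))
            - Complex.I • vecMulVec (b jj 0) (star (b jj m))) * A jj
            = Complex.I • vecMulVec (b jj m) (star (b jj 0)) := by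
          simp [hA, proj, sub_mul, Matrix.smul_mul, vmv_mul_vmv, h00, hm0]
        rw [c1, c2]
        have key : Complex.I • (-(Complex.I • vecMulVec (b jj 0) (star (b jj m)))
            - Complex.I • vecMulVec (b jj m) (star (b jj 0)))
            = vecMulVec (b jj 0) (star (b jj m)) + vecMulVec (b jj m) (star (b jj 0)) := by
          rw [smul_sub, smul_neg, smul_smul, smul_smul, Complex.I_mul_I]
          simp only [neg_smul, one_smul, neg_neg, sub_neg_eq_add]
        rw [key, slotL_apply]
    · -- σ₂ case
      refine ⟨tensorOp (fun _ => n) (Function.update (fun _ => (1 : Matrix (Fin n) (Fin n) ℂ)) jj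
        (vecMulVec (b jj 0) (star (b jj m)) + vecMulVec (b jj m) (star (b jj 0)))), ?_, ?_⟩
      · refine Submodule.subset_span (Set.mem_iUnion.2 ⟨jj, ?_⟩)
        refine ⟨_, ?_, ?_, rfl⟩
        · show _ᴴ = _
          simp only [conjTranspose_add, vmv_conjT]
          abel
        · simp [Matrix.trace_add, trace_vmv, h0m, hm0]
          rw [dotProduct_comm (b jj m), dotProduct_comm (b jj 0), h0m, hm0]
          simp
      · rw [comm_slot]
        have c1 : A jj * (vecMulVec (b jj 0) (star (b jj m))
            + vecMulVec (b jj m) (star (b jj 0)))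
            = vecMulVec (b jj 0) (star (b jj m)) := by
          simp [hA, proj, mul_add, vmv_mul_vmv, h00, h0m]
        have c2 : (vecMulVec (b jj 0) (star (b jj m))
            + vecMulVec (b jj m) (star (b jj 0))) * A jj
            = vecMulVec (b jj m) (star (b jj 0)) := by
          simp [hA, proj, add_mul, vmv_mul_vmv, h00, hm0]
        rw [c1, c2, smul_sub, slotL_apply]
  · -- spanning
    rintro x ⟨t, ht, rfl⟩
    show _ ∈ Submodule.span ℝ _
    have ht' : t ∈ Submodule.span ℝ (⋃ i, tauGen (fun _ : Fin k => n) i) := ht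
    clear ht
    induction ht' using Submodule.span_induction with
    | zero => simpa using Submodule.zero_mem _
    | add a c ha hc iha ihc =>
      have e : Complex.I • (tensorOp (fun _ => n) A * (a + c) - (a + c) * tensorOp (fun _ => n) A)
          = Complex.I • (tensorOp (fun _ => n) A * a - a * tensorOp (fun _ => n) A)
            + Complex.I • (tensorOp (fun _ => n) A * c - c * tensorOp (fun _ => n) A) := by
        rw [mul_add, add_mul, ← smul_add]
        congr 1
        abel
      rw [e]
      exact add_mem iha ihc
    | smul r a ha iha =>
      have e : Complex.I • (tensorOp (fun _ => n) A * (r • a) - (r • a) * tensorOp (fun _ => n) A)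
          = r • (Complex.I • (tensorOp (fun _ => n) A * a - a * tensorOp (fun _ => n) A)) := by
        rw [Matrix.mul_smul, Matrix.smul_mul, ← smul_sub, smul_comm]
      rw [e]
      exact Submodule.smul_mem _ r iha
    | mem g hg =>
      rw [Set.mem_iUnion] at hg
      obtain ⟨jj, h, hherm, htr, rfl⟩ := hg
      rw [comm_slot]
      -- expand the commutator in the orthonormal basis
      set d : Fin n → ℂ := fun m => star (b jj m) ⬝ᵥ h.mulVec (b jj 0) with hd
      have hcomp : ∑ m, vecMulVec (b jj m) (star (b jj m)) = 1 := completeness (b jj) (hb jj)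
      have hw : h.mulVec (b jj 0) = ∑ m, d m • b jj m := by
        conv_lhs => rw [← Matrix.one_mulVec (h.mulVec (b jj 0)), ← hcomp]
        rw [sum_mulVec']
        exact Finset.sum_congr rfl fun m _ => vmv_mulVec _ _ _
      have key : A jj * h - h * A jj
          = ∑ m, (starRingEnd ℂ (d m) • vecMulVec (b jj 0) (star (b jj m))
              - d m • vecMulVec (b jj m) (star (b jj 0))) := by
        have hP : A jj * h = vecMulVec (b jj 0) (star (h.mulVec (b jj 0))) := by
          show proj (b jj 0) * h = _
          rw [proj, vmv_mul, Matrix.star_mulVec, hherm]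
        have hQ : h * A jj = vecMulVec (h.mulVec (b jj 0)) (star (b jj 0)) := by
          show h * proj (b jj 0) = _
          rw [proj, mul_vmv]
        rw [hP, hQ, hw, Finset.sum_sub_distrib]
        congr 1
        · ext i j
          simp only [vecMulVec_apply, Matrix.sum_apply, star_sum, star_smul, Finset.mul_sum,
            Finset.sum_apply, Matrix.smul_apply, Pi.star_apply, Pi.smul_apply, smul_eq_mul,
            Complex.star_def]
          exact Finset.sum_congr rfl fun x _ => by ring
        · ext i j
          simp only [vecMulVec_apply, Matrix.sum_apply, Finset.sum_apply, Finset.sum_mul,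
            Matrix.smul_apply, Pi.smul_apply, smul_eq_mul]
          exact Finset.sum_congr rfl fun x _ => by ring
      rw [key, Finset.smul_sum, map_sum]
      refine Submodule.sum_mem _ fun m _ => ?_
      rcases eq_or_ne m 0 with rfl | hm
      · have hd0 : starRingEnd ℂ (d 0) = d 0 := by
          rw [hd]
          exact (herm_dot h hherm (b jj 0) (b jj 0)).symm
        rw [hd0, sub_self, smul_zero, map_zero]
        exact Submodule.zero_mem _
      · have hconj : starRingEnd ℂ (d m) = ((d m).re : ℂ) - ((d m).im : ℂ) * Complex.I := by
          apply Complex.ext <;> simp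
        have hdm : d m = ((d m).re : ℂ) + ((d m).im : ℂ) * Complex.I :=
          (Complex.re_add_im (d m)).symm
        have hX : Complex.I • (starRingEnd ℂ (d m) • vecMulVec (b jj 0) (star (b jj m))
              - d m • vecMulVec (b jj m) (star (b jj 0)))
            = ((d m).im : ℂ) • (vecMulVec (b jj 0) (star (b jj m))
                + vecMulVec (b jj m) (star (b jj 0)))
              + ((d m).re : ℂ) • (Complex.I • vecMulVec (b jj 0) (star (b jj m))
                - Complex.I • vecMulVec (b jj m) (star (b jj 0))) := by
          rw [hconj, hdm]
          match_scalars <;> (apply Complex.ext <;> simp)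
        rw [hX, map_add, _root_.map_smul, _root_.map_smul]
        have hr : ∀ (r : ℝ) (v : Op (fun _ : Fin k => n)), (r : ℂ) • v = r • v := fun r v => by
          rw [show ((r : ℝ) : ℂ) = algebraMap ℝ ℂ r from rfl, algebraMap_smul]
        rw [hr, hr]
        refine add_mem (Submodule.smul_mem _ _ ?_) (Submodule.smul_mem _ _ ?_)
        · exact Submodule.subset_span ⟨jj, m, hm, Or.inl rfl⟩
        · exact Submodule.subset_span ⟨jj, m, hm, Or.inr rfl⟩


end EWitness
end

section
/- Let H be a finite-dimensional complex Hilbert space and let a be a Hermitian operator on H such that for every rank-one orthogonal projection q with Tr(a q) = 0 and every Hermitian traceless h on H, one has Tr(a · i[q,h]) = 0. Then for all rank-one orthogonal projections p₁, p₂ on H, Tr(a p₁) · Tr(a p₂) ≥ 0; equivalently, a is either positive semidefinite or negative semidefinite. -/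
open Matrix
open scoped ComplexOrder

namespace EWitness

section helpers
variable {m : Type*} [Fintype m]

lemma trace_mul_proj (a : Matrix m m ℂ) (v : m → ℂ) :
    (a * proj v).trace = star v ⬝ᵥ (a *ᵥ v) := by
  simp only [proj, Matrix.trace, Matrix.diag, Matrix.mul_apply, Matrix.vecMulVec_apply,
    dotProduct, Matrix.mulVec, Pi.star_apply, Finset.mul_sum]
  congr 1; ext i; congr 1; ext j; ring

lemma tinner_proj (a : Matrix m m ℂ) (ha : a.IsHermitian) (v : m → ℂ) :
    tinner a (proj v) = (star v ⬝ᵥ (a *ᵥ v)).re := by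
  rw [tinner, ha.eq, trace_mul_proj]

lemma conj_dot (a : Matrix m m ℂ) (ha : a.IsHermitian) (x y : m → ℂ) :
    (starRingEnd ℂ) (star x ⬝ᵥ (a *ᵥ y)) = star y ⬝ᵥ (a *ᵥ x) := by
  have h1 : star x ⬝ᵥ (a *ᵥ y) = star (star (a *ᵥ y) ⬝ᵥ x) := Matrix.star_dotProduct _ _
  rw [h1]
  rw [show (starRingEnd ℂ) (star (star (a *ᵥ y) ⬝ᵥ x)) = star (a *ᵥ y) ⬝ᵥ x from star_star _]
  rw [Matrix.star_mulVec, ha.eq, Matrix.dotProduct_mulVec]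

lemma dot_smul_smul (M : Matrix m m ℂ) (k : ℂ) (y : m → ℂ) :
    star (k • y) ⬝ᵥ (M *ᵥ (k • y)) = (starRingEnd ℂ) k * k * (star y ⬝ᵥ (M *ᵥ y)) := by
  rw [star_smul, Matrix.mulVec_smul, smul_dotProduct, dotProduct_smul]
  simp [smul_eq_mul, Complex.star_def]; ring

lemma dot_self_smul (k : ℂ) (y : m → ℂ) :
    star (k • y) ⬝ᵥ (k • y) = (starRingEnd ℂ) k * k * (star y ⬝ᵥ y) := by
  rw [star_smul, smul_dotProduct, dotProduct_smul]
  simp [smul_eq_mul, Complex.star_def]; ring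

lemma dot_self_eq (x : m → ℂ) :
    star x ⬝ᵥ x = ((∑ i, Complex.normSq (x i) : ℝ) : ℂ) := by
  rw [dotProduct]
  push_cast
  congr 1; ext i
  simp [Complex.normSq_eq_conj_mul_self]

lemma exists_unit (x : m → ℂ) (hx : x ≠ 0) :
    ∃ (u : m → ℂ) (r : ℝ), 0 < r ∧ star u ⬝ᵥ u = 1 ∧ x = ((r : ℝ) : ℂ) • u := by
  set ρ : ℝ := ∑ i, Complex.normSq (x i) with hρ
  have hρpos : 0 < ρ := by
    have hne : ∃ i, x i ≠ 0 := by
      by_contra h; push_neg at h; exact hx (funext h)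
    obtain ⟨i, hi⟩ := hne
    refine Finset.sum_pos' (fun j _ => Complex.normSq_nonneg _) ⟨i, Finset.mem_univ i, ?_⟩
    exact (Complex.normSq_pos).mpr hi
  set r : ℝ := Real.sqrt ρ with hr
  have hrpos : 0 < r := Real.sqrt_pos.mpr hρpos
  refine ⟨((r : ℝ) : ℂ)⁻¹ • x, r, hrpos, ?_, ?_⟩
  · rw [dot_self_smul, dot_self_eq, ← hρ, Complex.conj_inv, Complex.conj_ofReal]
    have h1 : ((r:ℝ):ℂ) ≠ 0 := by exact_mod_cast hrpos.ne'
    have h2 : ((r:ℝ):ℂ) * ((r:ℝ):ℂ) = ((ρ:ℝ):ℂ) := by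
      norm_cast; exact Real.mul_self_sqrt hρpos.le
    field_simp
    linear_combination -h2
  · rw [smul_smul, mul_inv_cancel₀, one_smul]
    exact_mod_cast hrpos.ne'

end helpers

lemma no_opposite {m : Type*} [Fintype m] [DecidableEq m]
    (a : Matrix m m ℂ) (ha : a.IsHermitian)
    (hker : ∀ u : m → ℂ, star u ⬝ᵥ u = 1 → tinner a (proj u) = 0 → a *ᵥ u = 0)
    (v w : m → ℂ) (hv : star v ⬝ᵥ v = 1) (hw : star w ⬝ᵥ w = 1)
    (hFv : 0 < (star v ⬝ᵥ (a *ᵥ v)).re) (hFw : (star w ⬝ᵥ (a *ᵥ w)).re < 0) : False := by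
  classical
  set ip : ℂ := star v ⬝ᵥ w with hip
  set A : ℝ := ‖ip‖ with hA
  have hAnn : 0 ≤ A := norm_nonneg ip
  set k : ℂ := if ip = 0 then 1 else (starRingEnd ℂ) ip / ((A : ℝ) : ℂ) with hk
  have hkk : (starRingEnd ℂ) k * k = 1 := by
    by_cases h : ip = 0
    · simp [hk, h]
    · have habs : A ≠ 0 := by simpa [hA] using (norm_ne_zero_iff.mpr h)
      have hn : Complex.normSq k = 1 := by
        rw [hk, if_neg h, Complex.normSq_div, Complex.normSq_conj, Complex.normSq_ofReal,
          hA, ← Complex.sq_norm]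
        field_simp
      calc (starRingEnd ℂ) k * k = ((Complex.normSq k : ℝ) : ℂ) := by
            rw [Complex.normSq_eq_conj_mul_self]
        _ = 1 := by rw [hn]; norm_num
  set w' : m → ℂ := k • w with hw'def
  have hvw' : star v ⬝ᵥ w' = ((A : ℝ) : ℂ) := by
    rw [hw'def, dotProduct_smul, smul_eq_mul, ← hip]
    by_cases h : ip = 0
    · simp [hk, h, hA]
    · have habs : ((A:ℝ):ℂ) ≠ 0 := by
        simpa [hA] using (Complex.ofReal_ne_zero.mpr (norm_ne_zero_iff.mpr h))
      rw [hk, if_neg h, div_mul_eq_mul_div]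
      rw [show (starRingEnd ℂ) ip * ip = ((Complex.normSq ip : ℝ) : ℂ) by
        rw [Complex.normSq_eq_conj_mul_self]]
      rw [show ((Complex.normSq ip : ℝ) : ℂ) = ((A:ℝ):ℂ) * ((A:ℝ):ℂ) by
        rw [hA, ← Complex.sq_norm]; push_cast; ring]
      field_simp
  have hw'unit : star w' ⬝ᵥ w' = 1 := by
    rw [hw'def, dot_self_smul, hw, hkk, mul_one]
  have hFw' : (star w' ⬝ᵥ (a *ᵥ w')).re = (star w ⬝ᵥ (a *ᵥ w)).re := by
    rw [hw'def, dot_smul_smul, hkk, one_mul]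
  -- the path
  set z : ℝ → (m → ℂ) := fun t => ((1 - t : ℝ) : ℂ) • v + ((t : ℝ) : ℂ) • w' with hz
  set g : ℝ → ℝ := fun t => (star (z t) ⬝ᵥ (a *ᵥ z t)).re with hg
  have hg0 : g 0 = (star v ⬝ᵥ (a *ᵥ v)).re := by simp [hg, hz]
  have hg1 : g 1 = (star w ⬝ᵥ (a *ᵥ w)).re := by simp [hg, hz, hFw']
  have hzc : Continuous z := by
    apply Continuous.add
    · exact (Complex.continuous_ofReal.comp (continuous_const.sub continuous_id)).smul
        continuous_const
    · exact Complex.continuous_ofReal.smul continuous_const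
  have hgc : Continuous g :=
    Complex.continuous_re.comp ((continuous_star.comp hzc).dotProduct
      (continuous_const.matrix_mulVec hzc))
  have hmem : (0:ℝ) ∈ Set.Icc (g 1) (g 0) := by
    constructor
    · rw [hg1]; exact hFw.le
    · rw [hg0]; exact hFv.le
  obtain ⟨t₀, ht₀mem, hgt₀⟩ :=
    intermediate_value_Icc' (by norm_num : (0:ℝ) ≤ 1) hgc.continuousOn hmem
  obtain ⟨ht0, ht1⟩ := ht₀mem
  have htlt1 : t₀ < 1 := by
    rcases lt_or_eq_of_le ht1 with h | h
    · exact h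
    · exfalso; rw [h] at hgt₀; rw [hg1] at hgt₀; linarith
  have htgt0 : 0 < t₀ := by
    rcases lt_or_eq_of_le ht0 with h | h
    · exact h
    · exfalso; rw [← h] at hgt₀; rw [hg0] at hgt₀; linarith
  -- z t₀ ≠ 0
  have hz0 : z t₀ ≠ 0 := by
    intro h
    have h2 : star v ⬝ᵥ z t₀ = 0 := by rw [h]; simp
    have h3 : star v ⬝ᵥ z t₀ = ((1 - t₀ : ℝ):ℂ) + ((t₀:ℝ):ℂ) * ((A:ℝ):ℂ) := by
      rw [hz]
      simp only [dotProduct_add, dotProduct_smul, smul_eq_mul, hv, hvw', mul_one]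
    rw [h3] at h2
    have h4 : (1 - t₀) + t₀ * A = 0 := by exact_mod_cast h2
    nlinarith
  obtain ⟨u, r, hrpos, huunit, hzu⟩ := exists_unit (z t₀) hz0
  have hFz : (star (z t₀) ⬝ᵥ (a *ᵥ z t₀)) = ((r*r : ℝ):ℂ) * (star u ⬝ᵥ (a *ᵥ u)) := by
    rw [hzu, dot_smul_smul, Complex.conj_ofReal]; push_cast; ring
  have hFu : tinner a (proj u) = 0 := by
    rw [tinner_proj a ha u]
    have : g t₀ = r * r * (star u ⬝ᵥ (a *ᵥ u)).re := by
      rw [hg]; simp only []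
      rw [hFz, Complex.re_ofReal_mul]
    rw [hgt₀] at this
    have h5 : r * r ≠ 0 := by positivity
    exact (mul_eq_zero.mp this.symm).resolve_left h5
  have hau : a *ᵥ u = 0 := hker u huunit hFu
  have haz : a *ᵥ z t₀ = 0 := by
    rw [hzu, Matrix.mulVec_smul, hau, smul_zero]
  -- final algebra
  have hexp : ((1 - t₀:ℝ):ℂ) • (a *ᵥ v) + ((t₀:ℝ):ℂ) • (a *ᵥ w') = 0 := by
    rw [← Matrix.mulVec_smul, ← Matrix.mulVec_smul, ← Matrix.mulVec_add]
    exact haz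
  have e1 : ((1-t₀:ℝ):ℂ) * (star v ⬝ᵥ (a *ᵥ v)) + ((t₀:ℝ):ℂ) * (star v ⬝ᵥ (a *ᵥ w')) = 0 := by
    have := congrArg (fun y => star v ⬝ᵥ y) hexp
    simpa [dotProduct_add, dotProduct_smul, smul_eq_mul] using this
  have e2 : ((1-t₀:ℝ):ℂ) * (star w' ⬝ᵥ (a *ᵥ v)) + ((t₀:ℝ):ℂ) * (star w' ⬝ᵥ (a *ᵥ w')) = 0 := by
    have := congrArg (fun y => star w' ⬝ᵥ y) hexp
    simpa [dotProduct_add, dotProduct_smul, smul_eq_mul] using this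
  have hD : star v ⬝ᵥ (a *ᵥ w') = (starRingEnd ℂ) (star w' ⬝ᵥ (a *ᵥ v)) :=
    (conj_dot a ha w' v).symm
  have hB : (starRingEnd ℂ) (star w' ⬝ᵥ (a *ᵥ w')) = star w' ⬝ᵥ (a *ᵥ w') :=
    conj_dot a ha w' w'
  have e2c : ((1-t₀:ℝ):ℂ) * (starRingEnd ℂ) (star w' ⬝ᵥ (a *ᵥ v))
      + ((t₀:ℝ):ℂ) * (star w' ⬝ᵥ (a *ᵥ w')) = 0 := by
    have := congrArg (starRingEnd ℂ) e2
    simpa [map_add, _root_.map_mul, Complex.conj_ofReal, hB] using this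
  rw [hD] at e1
  have key : ((1-t₀:ℝ):ℂ)^2 * (star v ⬝ᵥ (a *ᵥ v)) = ((t₀:ℝ):ℂ)^2 * (star w' ⬝ᵥ (a *ᵥ w')) := by
    linear_combination ((1-t₀:ℝ):ℂ) * e1 - ((t₀:ℝ):ℂ) * e2c
  have hre := congrArg Complex.re key
  rw [show (((1-t₀:ℝ):ℂ))^2 = (((1-t₀)^2 : ℝ):ℂ) by push_cast; ring,
    show (((t₀:ℝ):ℂ))^2 = ((t₀^2 : ℝ):ℂ) by push_cast; ring,
    Complex.re_ofReal_mul, Complex.re_ofReal_mul, hFw'] at hre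
  have h6 : 0 < (1 - t₀)^2 * (star v ⬝ᵥ (a *ᵥ v)).re :=
    mul_pos (pow_pos (sub_pos.mpr htlt1) 2) hFv
  have h7 : t₀^2 * (star w ⬝ᵥ (a *ᵥ w)).re < 0 :=
    mul_neg_of_pos_of_neg (pow_pos htgt0 2) hFw
  linarith

lemma proj_isHermitian {m : Type*} (v : m → ℂ) : (proj v).IsHermitian := by
  ext i j
  simp [proj, Matrix.conjTranspose_apply, Matrix.vecMulVec_apply, mul_comm]

lemma proj_mulVec {m : Type*} [Fintype m] (v x : m → ℂ) :
    proj v *ᵥ x = (star v ⬝ᵥ x) • v := by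
  ext i
  simp [proj, Matrix.mulVec, Matrix.vecMulVec_apply, dotProduct, Finset.mul_sum, mul_comm,
    mul_left_comm]

lemma mulVec_zero_of_tinner_zero {m : Type*} [Fintype m] [DecidableEq m]
    (a : Matrix m m ℂ) (ha : a.IsHermitian)
    (hstar : ∀ v : m → ℂ, star v ⬝ᵥ v = 1 → tinner a (proj v) = 0 →
      ∀ h : Matrix m m ℂ, h.IsHermitian → h.trace = 0 →
        tinner a (Complex.I • (proj v * h - h * proj v)) = 0)
    (u : m → ℂ) (hu : star u ⬝ᵥ u = 1) (h0 : tinner a (proj u) = 0) :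
    a *ᵥ u = 0 := by
  set q := proj u with hq
  set c : Matrix m m ℂ := Complex.I • (a * q - q * a) with hc
  have hqH : qᴴ = q := proj_isHermitian u
  have hcH : c.IsHermitian := by
    rw [Matrix.IsHermitian, hc]
    rw [Matrix.conjTranspose_smul, Matrix.conjTranspose_sub, Matrix.conjTranspose_mul,
      Matrix.conjTranspose_mul, ha.eq, hqH]
    simp only [smul_sub, smul_smul, Complex.star_def, Complex.conj_I]
    module
  have hctr : c.trace = 0 := by
    rw [hc, Matrix.trace_smul, Matrix.trace_sub, Matrix.trace_mul_comm]
    simp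
  -- key: tinner a (I • (q*h - h*q)) = Re (trace (c * h))
  have key : ∀ h : Matrix m m ℂ,
      tinner a (Complex.I • (q * h - h * q)) = ((c * h).trace).re := by
    intro h
    rw [tinner, ha.eq, Matrix.mul_smul, Matrix.trace_smul, hc, Matrix.smul_mul,
      Matrix.trace_smul]
    congr 2
    rw [Matrix.mul_sub, Matrix.sub_mul, Matrix.trace_sub, Matrix.trace_sub]
    congr 1
    · rw [Matrix.mul_assoc]
    · rw [← Matrix.mul_assoc a h q, Matrix.trace_mul_cycle a h q]
  have hcc : ((c * c).trace).re = 0 := by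
    rw [← key c]
    exact hstar u hu h0 c hcH hctr
  have hc0 : c = 0 := by
    have h1 : (c * c).trace = (cᴴ * c).trace := by rw [hcH.eq]
    have h2 : ((cᴴ * c).trace).re = ∑ i, ∑ j, Complex.normSq (c j i) := by
      simp only [Matrix.trace, Matrix.diag, Matrix.mul_apply, Matrix.conjTranspose_apply]
      rw [Complex.re_sum]
      congr 1; ext i
      rw [Complex.re_sum]
      congr 1; ext j
      simp [Complex.normSq_apply, Complex.mul_re]
    have h3 : ∑ i, ∑ j, Complex.normSq (c j i) = 0 := by
      rw [← h2, ← h1]; exact hcc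
    ext i j
    have := (Finset.sum_eq_zero_iff_of_nonneg (fun i _ => Finset.sum_nonneg
      (fun j _ => Complex.normSq_nonneg _))).mp h3 j (Finset.mem_univ j)
    have := (Finset.sum_eq_zero_iff_of_nonneg
      (fun j _ => Complex.normSq_nonneg _)).mp this i (Finset.mem_univ i)
    simpa using (Complex.normSq_eq_zero).mp this
  have hcomm : a * q = q * a := by
    have := hc0
    rw [hc, smul_eq_zero] at this
    rcases this with h | h
    · exact absurd h Complex.I_ne_zero
    · exact sub_eq_zero.mp h
  -- finish: a *ᵥ u = s • u with s real and s.re = 0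
  have hqu : q *ᵥ u = u := by
    rw [hq, proj_mulVec, hu, one_smul]
  set s : ℂ := star u ⬝ᵥ (a *ᵥ u) with hs
  have hau : a *ᵥ u = s • u := by
    calc a *ᵥ u = (a * q) *ᵥ u := by
          conv_lhs => rw [← hqu]
          rw [Matrix.mulVec_mulVec]
    _ = (q * a) *ᵥ u := by rw [hcomm]
    _ = q *ᵥ (a *ᵥ u) := by rw [Matrix.mulVec_mulVec]
    _ = s • u := by rw [hq, proj_mulVec, hs]
  have hstr : s = (a * q).trace := (trace_mul_proj a u).symm
  have hconj : (starRingEnd ℂ) s = s := by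
    rw [hstr]
    rw [← Complex.star_def, ← Matrix.trace_conjTranspose, Matrix.conjTranspose_mul, ha.eq, hqH,
      Matrix.trace_mul_comm]
  have hre : s.re = 0 := by
    rw [hs, ← tinner_proj a ha u]; exact h0
  have hs0 : s = 0 := by
    have := congrArg Complex.im hconj
    simp only [Complex.conj_im] at this
    have him : s.im = 0 := by linarith
    simp [Complex.ext_iff, hre, him]
  rw [hau, hs0, zero_smul]


/-- Let `a` be a Hermitian operator on a finite-dimensional complex
Hilbert space such that for every rank-one orthogonal projection `q = |v⟩⟨v|` with
`Tr(a q) = 0` and every Hermitian traceless `h`, one has `Tr(a · i[q,h]) = 0`.  Then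
`Tr(a p₁) · Tr(a p₂) ≥ 0` for all rank-one orthogonal projections `p₁, p₂`; equivalently,
`a` is either positive semidefinite or negative semidefinite. -/
theorem same_sign_on_pure_states_of_tangent_condition
    {m : Type*} [Fintype m] [DecidableEq m] (a : Matrix m m ℂ) (ha : a.IsHermitian)
    (hstar : ∀ v : m → ℂ, star v ⬝ᵥ v = 1 → tinner a (proj v) = 0 →
      ∀ h : Matrix m m ℂ, h.IsHermitian → h.trace = 0 →
        tinner a (Complex.I • (proj v * h - h * proj v)) = 0) :
    (∀ v w : m → ℂ, star v ⬝ᵥ v = 1 → star w ⬝ᵥ w = 1 →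
      0 ≤ tinner a (proj v) * tinner a (proj w)) ∧
    (a.PosSemidef ∨ (-a).PosSemidef) := by
  have hker : ∀ u : m → ℂ, star u ⬝ᵥ u = 1 → tinner a (proj u) = 0 → a *ᵥ u = 0 :=
    fun u hu h0 => mulVec_zero_of_tinner_zero a ha hstar u hu h0
  have part1 : ∀ v w : m → ℂ, star v ⬝ᵥ v = 1 → star w ⬝ᵥ w = 1 →
      0 ≤ tinner a (proj v) * tinner a (proj w) := by
    intro v w hv hw
    by_contra hlt
    push_neg at hlt
    rw [tinner_proj a ha v, tinner_proj a ha w] at hlt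
    rcases mul_neg_iff.mp hlt with ⟨h1, h2⟩ | ⟨h1, h2⟩
    · exact no_opposite a ha hker v w hv hw h1 h2
    · exact no_opposite a ha hker w v hw hv h2 h1
  refine ⟨part1, ?_⟩
  by_cases hneg : ∃ w : m → ℂ, star w ⬝ᵥ w = 1 ∧ (star w ⬝ᵥ (a *ᵥ w)).re < 0
  · right
    obtain ⟨w, hw, hFw⟩ := hneg
    refine Matrix.PosSemidef.of_dotProduct_mulVec_nonneg ha.neg (fun x => ?_)
    by_cases hx : x = 0
    · simp [hx]
    · obtain ⟨u, r, hrpos, huunit, hxu⟩ := exists_unit x hx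
      have hFu : (star u ⬝ᵥ (a *ᵥ u)).re ≤ 0 := by
        have := part1 u w huunit hw
        rw [tinner_proj a ha u, tinner_proj a ha w] at this
        nlinarith
      have hval : star x ⬝ᵥ ((-a) *ᵥ x) = ((r*r:ℝ):ℂ) * (star u ⬝ᵥ ((-a) *ᵥ u)) := by
        rw [hxu, dot_smul_smul, Complex.conj_ofReal]; push_cast; ring
      have him : (starRingEnd ℂ) (star x ⬝ᵥ ((-a) *ᵥ x)) = star x ⬝ᵥ ((-a) *ᵥ x) :=
        conj_dot (-a) ha.neg x x
      rw [Complex.le_def]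
      constructor
      · rw [hval, Complex.re_ofReal_mul]
        have : (star u ⬝ᵥ ((-a) *ᵥ u)).re = -(star u ⬝ᵥ (a *ᵥ u)).re := by
          rw [Matrix.neg_mulVec, dotProduct_neg, Complex.neg_re]
        rw [this]
        simp only [Complex.zero_re]
        nlinarith
      · have := congrArg Complex.im him
        simp only [Complex.conj_im] at this
        simp only [Complex.zero_im]
        linarith
  · left
    push_neg at hneg
    refine Matrix.PosSemidef.of_dotProduct_mulVec_nonneg ha (fun x => ?_)
    by_cases hx : x = 0
    · simp [hx]
    · obtain ⟨u, r, hrpos, huunit, hxu⟩ := exists_unit x hx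
      have hFu : 0 ≤ (star u ⬝ᵥ (a *ᵥ u)).re := hneg u huunit
      have hval : star x ⬝ᵥ (a *ᵥ x) = ((r*r:ℝ):ℂ) * (star u ⬝ᵥ (a *ᵥ u)) := by
        rw [hxu, dot_smul_smul, Complex.conj_ofReal]; push_cast; ring
      have him : (starRingEnd ℂ) (star x ⬝ᵥ (a *ᵥ x)) = star x ⬝ᵥ (a *ᵥ x) :=
        conj_dot a ha x x
      rw [Complex.le_def]
      constructor
      · rw [hval, Complex.re_ofReal_mul]
        simp only [Complex.zero_re]
        nlinarith
      · have := congrArg Complex.im him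
        simp only [Complex.conj_im] at this
        simp only [Complex.zero_im]
        linarith
end EWitness
end

section
/- Let H be a finite-dimensional complex Hilbert space and let a be a Hermitian operator on H satisfying: for every rank-one orthogonal projection q with Tr(a q) = 0 and every Hermitian traceless h, Tr(a · i[q,h]) = 0. If |e₁⟩, |e₂⟩ ∈ H are linearly independent unit vectors with Tr(a |e₁⟩⟨e₁|) = 0 and Tr(a |e₂⟩⟨e₂|) = 0, then for every nonzero vector |g⟩ = α₁|e₁⟩ + α₂|e₂⟩ (α₁, α₂ ∈ ℂ), the projection g = |g⟩⟨g|/⟨g|g⟩ satisfies Tr(a g) = 0. -/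
open Matrix
open scoped ComplexOrder

namespace EWitness

lemma vmv_mulVec_s11 {m : Type*} [Fintype m] (x y u : m → ℂ) :
    (vecMulVec x y) *ᵥ u = (y ⬝ᵥ u) • x := by
  ext i
  simp only [mulVec, dotProduct, vecMulVec_apply, Pi.smul_apply, smul_eq_mul, Finset.sum_mul]
  exact Finset.sum_congr rfl fun j _ => by ring

lemma trace_mul_vmv {m : Type*} [Fintype m] (M : Matrix m m ℂ) (x y : m → ℂ) :
    (M * vecMulVec x y).trace = y ⬝ᵥ (M *ᵥ x) := by
  simp only [Matrix.trace, Matrix.diag, Matrix.mul_apply, vecMulVec_apply, mulVec, dotProduct]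
  refine Finset.sum_congr rfl fun i _ => ?_
  rw [Finset.mul_sum]
  exact Finset.sum_congr rfl fun j _ => by ring

lemma trace_vmv_s11 {m : Type*} [Fintype m] (x y : m → ℂ) :
    (vecMulVec x y).trace = x ⬝ᵥ y := by
  simp [Matrix.trace, Matrix.diag, vecMulVec_apply, dotProduct]

lemma vmv_conjT_s11 {m : Type*} (x y : m → ℂ) :
    (vecMulVec x (star y))ᴴ = vecMulVec y (star x) := by
  ext i j
  simp [vecMulVec_apply, conjTranspose_apply, mul_comm]

lemma star_dot {m : Type*} [Fintype m] (x y : m → ℂ) :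
    star (star x ⬝ᵥ y) = star y ⬝ᵥ x := by
  simp [dotProduct, Finset.sum_comm, mul_comm]

lemma kernel {m : Type*} [Fintype m] [DecidableEq m] (a : Matrix m m ℂ)
    (ha : a.IsHermitian) (e : m → ℂ) (he : star e ⬝ᵥ e = 1)
    (hz : tinner a (proj e) = 0)
    (htan : ∀ h : Matrix m m ℂ, h.IsHermitian → h.trace = 0 →
        tinner a (Complex.I • (proj e * h - h * proj e)) = 0) :
    a *ᵥ e = 0 := by
  have haeq : aᴴ = a := ha
  set w : m → ℂ := a *ᵥ e with hw
  set r : ℂ := star e ⬝ᵥ w with hrdef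
  have hstarw : star w = star e ᵥ* a := by rw [hw, star_mulVec, haeq]
  have hswe : star w ⬝ᵥ e = r := by
    rw [hstarw, ← dotProduct_mulVec, hrdef, hw]
  have hconj : star r = r := by
    rw [hrdef, star_dot, hstarw, ← dotProduct_mulVec, ← hw]
  have hre : r.re = 0 := by
    have : tinner a (proj e) = r.re := by
      rw [tinner, proj, trace_mul_vmv, haeq]
    rw [this] at hz; exact hz
  have hr0 : r = 0 := by
    have him : r.im = 0 := by
      have := congrArg Complex.im hconj
      simp [Complex.star_def] at this
      linarith
    exact Complex.ext hre him
  -- the tangent direction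
  set u : m → ℂ := Complex.I • w with hu
  have hsu : star u = (-Complex.I) • star w := by
    rw [hu, star_smul]; simp [Complex.star_def]
  set V₁ : Matrix m m ℂ := vecMulVec e (star u) with hV₁
  set V₂ : Matrix m m ℂ := vecMulVec u (star e) with hV₂
  set h : Matrix m m ℂ := V₁ + V₂ with hh
  have hherm : h.IsHermitian := by
    unfold Matrix.IsHermitian
    rw [hh, conjTranspose_add, hV₁, hV₂, vmv_conjT_s11, ← star_star u, vmv_conjT_s11, star_star,
      add_comm]
  have hswe0 : star w ⬝ᵥ e = 0 := by rw [hswe, hr0]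
  have hesw : e ⬝ᵥ star w = 0 := by rw [dotProduct_comm]; exact hswe0
  have hseu : star e ⬝ᵥ u = 0 := by
    rw [hu, dotProduct_smul, ← hrdef, hr0, smul_zero]
  have htr : h.trace = 0 := by
    rw [hh, trace_add, hV₁, hV₂, trace_vmv_s11, trace_vmv_s11, hsu, dotProduct_smul,
      hesw, dotProduct_comm, hseu]
    simp
  have key := htan h hherm htr
  set n : ℂ := star w ⬝ᵥ w with hn
  -- the four traces
  have hqe : proj e *ᵥ e = e := by rw [proj, vmv_mulVec_s11, he, one_smul]
  have hqu : proj e *ᵥ u = 0 := by rw [proj, vmv_mulVec_s11, hseu, zero_smul]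
  have hV₁e : V₁ *ᵥ e = 0 := by
    rw [hV₁, vmv_mulVec_s11, hsu, smul_dotProduct, hswe0, smul_zero, zero_smul]
  have hV₂e : V₂ *ᵥ e = u := by rw [hV₂, vmv_mulVec_s11, he, one_smul]
  have t1 : (a * (proj e * V₁)).trace = (-Complex.I) * n := by
    rw [← mul_assoc, hV₁, trace_mul_vmv, hsu, ← mulVec_mulVec, hqe, ← hw,
      smul_dotProduct, hn, smul_eq_mul]
  have t2 : (a * (proj e * V₂)).trace = 0 := by
    rw [← mul_assoc, hV₂, trace_mul_vmv, ← mulVec_mulVec, hqu, mulVec_zero, dotProduct_zero]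
  have t3 : (a * (V₁ * proj e)).trace = 0 := by
    rw [← mul_assoc, proj, trace_mul_vmv, ← mulVec_mulVec, hV₁e, mulVec_zero, dotProduct_zero]
  have t4 : (a * (V₂ * proj e)).trace = Complex.I * n := by
    rw [← mul_assoc, proj, trace_mul_vmv, ← mulVec_mulVec, hV₂e, hu, mulVec_smul,
      dotProduct_smul, dotProduct_mulVec, ← hstarw, ← hn, smul_eq_mul]
  have hexpand : tinner a (Complex.I • (proj e * h - h * proj e)) = (2 * n).re := by
    rw [tinner, haeq, mul_smul_comm, trace_smul, mul_sub, trace_sub, hh, mul_add, add_mul, mul_add,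
      mul_add, trace_add, trace_add, t1, t2, t3, t4]
    ring_nf
    rw [Complex.I_sq]
    ring_nf
  rw [hexpand] at key
  have hnconj : star n = n := by rw [hn, star_dot, dotProduct_comm]
  have hn0 : n = 0 := by
    have hre2 : n.re = 0 := by
      have : (2 * n).re = 2 * n.re := by simp
      rw [this] at key; linarith
    have him : n.im = 0 := by
      have := congrArg Complex.im hnconj
      simp [Complex.star_def] at this
      linarith
    exact Complex.ext hre2 him
  exact dotProduct_star_self_eq_zero.mp (by rw [← hn]; exact hn0)

/-- Let `a` be a Hermitian operator satisfying the tangent condition: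
for every rank-one orthogonal projection `q` with `Tr(a q) = 0` and every Hermitian
traceless `h`, `Tr(a · i[q,h]) = 0`.  If `|e₁⟩, |e₂⟩` are linearly independent unit
vectors with `Tr(a |e₁⟩⟨e₁|) = 0 = Tr(a |e₂⟩⟨e₂|)`, then for every nonzero
`|g⟩ = α₁|e₁⟩ + α₂|e₂⟩` the normalized projection `|g⟩⟨g|/⟨g|g⟩` also satisfies
`Tr(a g) = 0`. -/
theorem line_of_orthogonal_projections
    {m : Type*} [Fintype m] [DecidableEq m] (a : Matrix m m ℂ) (ha : a.IsHermitian)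
    (hstar : ∀ v : m → ℂ, star v ⬝ᵥ v = 1 → tinner a (proj v) = 0 →
      ∀ h : Matrix m m ℂ, h.IsHermitian → h.trace = 0 →
        tinner a (Complex.I • (proj v * h - h * proj v)) = 0)
    (e₁ e₂ : m → ℂ) (he₁ : star e₁ ⬝ᵥ e₁ = 1) (he₂ : star e₂ ⬝ᵥ e₂ = 1)
    (hli : LinearIndependent ℂ ![e₁, e₂])
    (hz₁ : tinner a (proj e₁) = 0) (hz₂ : tinner a (proj e₂) = 0) :
    ∀ α₁ α₂ : ℂ, α₁ • e₁ + α₂ • e₂ ≠ 0 →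
      tinner a ((star (α₁ • e₁ + α₂ • e₂) ⬝ᵥ (α₁ • e₁ + α₂ • e₂))⁻¹ •
        proj (α₁ • e₁ + α₂ • e₂)) = 0 := by
  have k₁ : a *ᵥ e₁ = 0 := kernel a ha e₁ he₁ hz₁ (hstar e₁ he₁ hz₁)
  have k₂ : a *ᵥ e₂ = 0 := kernel a ha e₂ he₂ hz₂ (hstar e₂ he₂ hz₂)
  intro α₁ α₂ hg
  set g : m → ℂ := α₁ • e₁ + α₂ • e₂ with hgdef
  have hag : a *ᵥ g = 0 := by
    rw [hgdef, mulVec_add, mulVec_smul, mulVec_smul, k₁, k₂, smul_zero, smul_zero, add_zero]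
  have haeq : aᴴ = a := ha
  rw [tinner, mul_smul_comm, trace_smul, proj, haeq, trace_mul_vmv, hag, dotProduct_zero,
    smul_zero, Complex.zero_re]


end EWitness
end
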